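/- Let X be a topological space (viewed as the fiber of the directed suspension ΣX). The map J : X → P(ΣX)(𝟎, 𝟏) sending x to the path t ↦ [x, t] is a homotopy equivalence between X and the space of directed paths in ΣX from the bottom point 𝟎 to the top point 𝟏. -/

import Mathlib

/-- The setoid collapsing the bottom `X × {0}` and the top `X × {1}` of the cylinder. -/
def suspSetoid (X : Type*) : Setoid (X × unitInterval) where
  r p q := p = q ∨ (p.2 = 0 ∧ q.2 = 0) ∨ (p.2 = 1 ∧ q.2 = 1)
  iseqv := by
    constructor
    · exact fun p => Or.inl rfl
    · rintro p q (rfl | ⟨h1, h2⟩ | ⟨h1, h2⟩)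
      · exact Or.inl rfl
      · exact Or.inr (Or.inl ⟨h2, h1⟩)
      · exact Or.inr (Or.inr ⟨h2, h1⟩)
    · rintro p q r (rfl | ⟨h1, h2⟩ | ⟨h1, h2⟩) (rfl | ⟨h3, h4⟩ | ⟨h3, h4⟩)
      · exact Or.inl rfl
      · exact Or.inr (Or.inl ⟨h3, h4⟩)
      · exact Or.inr (Or.inr ⟨h3, h4⟩)
      · exact Or.inr (Or.inl ⟨h1, h2⟩)
      · exact Or.inr (Or.inl ⟨h1, h4⟩)
      · exact absurd (h2 ▸ h3) (by norm_num [Subtype.ext_iff])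
      · exact Or.inr (Or.inr ⟨h1, h2⟩)
      · exact absurd (h2 ▸ h3) (by norm_num [Subtype.ext_iff])
      · exact Or.inr (Or.inr ⟨h1, h4⟩)

/-- The directed suspension of a space, as a topological space. -/
def Susp (X : Type*) [TopologicalSpace X] : Type _ := Quotient (suspSetoid X)

instance (X : Type*) [TopologicalSpace X] : TopologicalSpace (Susp X) :=
  instTopologicalSpaceQuotient

/-- The bottom point `𝟎` of the directed suspension. -/
noncomputable def suspBot (X : Type*) [TopologicalSpace X] [Nonempty X] : Susp X :=
  Quotient.mk (suspSetoid X) (Classical.arbitrary X, 0)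

/-- The top point `𝟏` of the directed suspension. -/
noncomputable def suspTop (X : Type*) [TopologicalSpace X] [Nonempty X] : Susp X :=
  Quotient.mk (suspSetoid X) (Classical.arbitrary X, 1)

/-- The space of directed paths in `ΣX` from `𝟎` to `𝟏`: paths represented by a pair of a
continuous map into `X` and a non-decreasing map into `[0,1]`. -/
def DirSuspPaths (X : Type*) [TopologicalSpace X] [Nonempty X] : Type _ :=
  {γ : Path (suspBot X) (suspTop X) //
    ∃ (a : C(unitInterval, X)) (f : C(unitInterval, unitInterval)),
      Monotone ⇑f ∧ ∀ t, γ t = Quotient.mk (suspSetoid X) (a t, f t)}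

noncomputable instance (X : Type*) [TopologicalSpace X] [Nonempty X] :
    TopologicalSpace (DirSuspPaths X) :=
  instTopologicalSpaceSubtype

open Set unitInterval

namespace SuspAux

variable {X : Type*} [TopologicalSpace X]

/-- shorthand for the quotient map -/
abbrev QS (p : X × unitInterval) : Susp X := Quotient.mk (suspSetoid X) p

lemma rel_iff {p q : X × unitInterval} :
    (suspSetoid X).r p q ↔ p = q ∨ (p.2 = 0 ∧ q.2 = 0) ∨ (p.2 = 1 ∧ q.2 = 1) := Iff.rfl

lemma QS_eq_bot [Nonempty X] (x : X) : QS (x, 0) = suspBot X :=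
  Quotient.sound (Or.inr (Or.inl ⟨rfl, rfl⟩))

lemma QS_eq_top [Nonempty X] (x : X) : QS (x, 1) = suspTop X :=
  Quotient.sound (Or.inr (Or.inr ⟨rfl, rfl⟩))

/-- the height function on the suspension -/
noncomputable def suspPi : Susp X → ℝ :=
  Quotient.lift (fun p : X × unitInterval => (p.2 : ℝ)) (by
    rintro p q (rfl | ⟨h1, h2⟩ | ⟨h1, h2⟩) <;> simp_all)

@[simp] lemma suspPi_mk (p : X × unitInterval) : suspPi (QS p) = (p.2 : ℝ) := rfl

lemma continuous_suspPi : Continuous (suspPi (X := X)) :=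
  continuous_quot_lift _ (continuous_subtype_val.comp continuous_snd)

lemma suspPi_mem (p : Susp X) : suspPi p ∈ Icc (0:ℝ) 1 := by
  induction p using Quotient.ind
  exact (Subtype.mem _ : _ ∈ Icc (0:ℝ) 1)

/-- the height-modification function -/
noncomputable def T (u v k : ℝ) : ℝ := max (1 - max k 1 * (1 - u)) (min v (max k 1 * u))

lemma T_mem {u v : ℝ} (k : ℝ) (hu : u ∈ Icc (0:ℝ) 1) (hv : v ∈ Icc (0:ℝ) 1) :
    T u v k ∈ Icc (0:ℝ) 1 := by
  have h1 : (0:ℝ) ≤ max k 1 := le_trans zero_le_one (le_max_right _ _)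
  constructor
  · exact le_trans (le_min hv.1 (mul_nonneg h1 hu.1)) (le_max_right _ _)
  · exact max_le (by nlinarith [hu.2]) (le_trans (min_le_left _ _) hv.2)

lemma T_zero {u k : ℝ} (hu : 0 ≤ u) (hk : 1 ≤ max k 1 * (1 - u)) :
    T u 0 k = 0 := by
  have h1 : (0:ℝ) ≤ max k 1 := le_trans zero_le_one (le_max_right _ _)
  rw [T, min_eq_left (mul_nonneg h1 hu), max_eq_right (by linarith)]

lemma T_one {u k : ℝ} (hu : u ≤ 1) (hk : 1 ≤ max k 1 * u) :
    T u 1 k = 1 := by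
  have h1 : (0:ℝ) ≤ max k 1 := le_trans zero_le_one (le_max_right _ _)
  have h2 : 0 ≤ max k 1 * (1 - u) := mul_nonneg h1 (by linarith)
  rw [T, min_eq_left hk, max_eq_right (by linarith)]

lemma T_diag {u k : ℝ} (hu : u ∈ Icc (0:ℝ) 1) : T u u k = u := by
  have h1 : (1:ℝ) ≤ max k 1 := le_max_right _ _
  have h2 : u ≤ max k 1 * u := le_mul_of_one_le_left hu.1 h1
  have h3 : 1 - u ≤ max k 1 * (1 - u) := le_mul_of_one_le_left (by linarith [hu.2]) h1
  rw [T, min_eq_left h2, max_eq_right (by linarith)]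

lemma T_mid {u v k : ℝ} (hv : v ∈ Icc (0:ℝ) 1) (hk1 : 1 ≤ max k 1 * u)
    (hk2 : 1 ≤ max k 1 * (1 - u)) : T u v k = v := by
  rw [T, min_eq_left (le_trans hv.2 hk1), max_eq_right (by linarith [hv.1])]

lemma T_mono {u₁ u₂ v₁ v₂ : ℝ} (k : ℝ) (hu : u₁ ≤ u₂) (hv : v₁ ≤ v₂) :
    T u₁ v₁ k ≤ T u₂ v₂ k := by
  have h1 : (0:ℝ) ≤ max k 1 := le_trans zero_le_one (le_max_right _ _)
  exact max_le_max (by nlinarith) (min_le_min hv (by nlinarith))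

lemma continuous_T : Continuous fun p : (ℝ × ℝ) × ℝ => T p.1.1 p.1.2 p.2 := by
  unfold T; fun_prop

end SuspAux

namespace SuspAux

variable {X : Type*} [TopologicalSpace X]

/-- `T` bundled on the unit interval. -/
noncomputable def TI (u v : unitInterval) (k : ℝ) : unitInterval :=
  ⟨T u v k, T_mem k u.2 v.2⟩

lemma TI_bot (v : unitInterval) (k : ℝ) : TI 0 v k = 0 := by
  apply Subtype.ext
  show T ((0:unitInterval):ℝ) v k = ((0:unitInterval):ℝ)
  have h1 : (1:ℝ) ≤ max k 1 := le_max_right _ _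
  rw [Set.Icc.coe_zero, T, mul_zero, min_eq_right v.2.1, sub_zero, mul_one,
    max_eq_right (by linarith)]

lemma TI_top (v : unitInterval) (k : ℝ) : TI 1 v k = 1 := by
  apply Subtype.ext
  show T ((1:unitInterval):ℝ) v k = ((1:unitInterval):ℝ)
  have h1 : (1:ℝ) ≤ max k 1 := le_max_right _ _
  rw [Set.Icc.coe_one, T, sub_self, mul_zero, sub_zero,
    max_eq_left (le_trans (min_le_left _ _) v.2.2)]

/-- the core of the height-modification map on the suspension -/
noncomputable def Theta0 : C(X × unitInterval, C(unitInterval × ℝ, Susp X)) :=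
  ContinuousMap.curry
    ⟨fun p => QS (p.1.1, TI p.1.2 p.2.1 p.2.2), by
      apply Continuous.comp continuous_quotient_mk'
      refine Continuous.prodMk (continuous_fst.comp continuous_fst) ?_
      apply Continuous.subtype_mk
      exact continuous_T.comp ((((continuous_subtype_val.comp
        (continuous_snd.comp continuous_fst)).prodMk (continuous_subtype_val.comp
        (continuous_fst.comp continuous_snd))).prodMk (continuous_snd.comp continuous_snd)))⟩

/-- the height-modification map on the suspension -/
noncomputable def Theta : Susp X → C(unitInterval × ℝ, Susp X) :=
  Quotient.lift (fun p => Theta0 p) (by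
    rintro ⟨x, u⟩ ⟨y, w⟩ (h | ⟨h1, h2⟩ | ⟨h1, h2⟩)
    · rw [h]
    · ext vk
      show QS (x, TI u vk.1 vk.2) = QS (y, TI w vk.1 vk.2)
      simp only at h1 h2; subst h1; subst h2
      rw [TI_bot]
      exact Quotient.sound (Or.inr (Or.inl ⟨rfl, rfl⟩))
    · ext vk
      show QS (x, TI u vk.1 vk.2) = QS (y, TI w vk.1 vk.2)
      simp only at h1 h2; subst h1; subst h2
      rw [TI_top]
      exact Quotient.sound (Or.inr (Or.inr ⟨rfl, rfl⟩)))

@[simp] lemma Theta_mk (p : X × unitInterval) (vk : unitInterval × ℝ) :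
    Theta (QS p) vk = QS (p.1, TI p.2 vk.1 vk.2) := rfl

lemma continuous_Theta : Continuous (Theta (X := X)) :=
  continuous_quot_lift _ Theta0.continuous

end SuspAux

namespace SuspAux

lemma int_upper {g : ℝ → ℝ} (hc : Continuous g) (hm : Monotone g) {a b : ℝ} (hab : a ≤ b) :
    ∫ t in a..b, g t ≤ (b - a) * g b := by
  have := intervalIntegral.integral_mono_on hab (hc.intervalIntegrable a b)
    (intervalIntegrable_const (c := g b) (μ := MeasureTheory.volume)) (fun x hx => hm hx.2)
  simpa using this

lemma int_lower {g : ℝ → ℝ} (hc : Continuous g) (hm : Monotone g) {a b : ℝ} (hab : a ≤ b) :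
    (b - a) * g a ≤ ∫ t in a..b, g t := by
  have := intervalIntegral.integral_mono_on hab (intervalIntegrable_const (c := g a) (μ := MeasureTheory.volume))
    (hc.intervalIntegrable a b) (fun x hx => hm hx.1)
  simpa using this

lemma key_integral {g : ℝ → ℝ} (hc : Continuous g) (hm : Monotone g)
    (h0 : g 0 = 0) (h1 : g 1 = 1) :
    (∫ t in (0:ℝ)..1, g t) ∈ Set.Ioo (0:ℝ) 1 ∧
      g (1 - ∫ t in (0:ℝ)..1, g t) ∈ Set.Ioo (0:ℝ) 1 := by
  set m := ∫ t in (0:ℝ)..1, g t with hm_def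
  have hint : ∀ a b : ℝ, IntervalIntegrable g MeasureTheory.volume a b :=
    fun a b => hc.intervalIntegrable a b
  -- continuity at 0 and 1
  obtain ⟨δ₀, hδ₀, hδ⟩ := Metric.continuousAt_iff.mp (hc.continuousAt (x := 0)) (1/2)
    (by norm_num)
  obtain ⟨δ₁, hδ₁, hδ'⟩ := Metric.continuousAt_iff.mp (hc.continuousAt (x := 1)) (1/2)
    (by norm_num)
  have hmlt : m < 1 := by
    set δ := min (δ₀ / 2) (1/2) with hδdef
    have hδpos : 0 < δ := lt_min (by linarith) (by norm_num)
    have hδle : δ ≤ 1/2 := min_le_right _ _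
    have hgδ : g δ ≤ 1/2 := by
      have : dist (g δ) (g 0) < 1/2 := hδ (by
        rw [Real.dist_eq, sub_zero, abs_of_pos hδpos]
        exact lt_of_le_of_lt (min_le_left _ _) (by linarith))
      rw [h0, Real.dist_eq, sub_zero] at this
      exact le_of_lt (lt_of_le_of_lt (le_abs_self _) this)
    have hsplit : m = (∫ t in (0:ℝ)..δ, g t) + ∫ t in δ..1, g t :=
      (intervalIntegral.integral_add_adjacent_intervals (hint 0 δ) (hint δ 1)).symm
    have b1 : (∫ t in (0:ℝ)..δ, g t) ≤ δ * g δ := by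
      simpa using int_upper hc hm hδpos.le
    have b2 : (∫ t in δ..1, g t) ≤ (1 - δ) * 1 := by
      have := int_upper hc hm (by linarith : δ ≤ 1)
      rwa [h1] at this
    nlinarith
  have hmpos : 0 < m := by
    set ε := min (δ₁ / 2) (1/2) with hεdef
    have hεpos : 0 < ε := lt_min (by linarith) (by norm_num)
    have hεle : ε ≤ 1/2 := min_le_right _ _
    have hg1ε : 1/2 ≤ g (1 - ε) := by
      have : dist (g (1 - ε)) (g 1) < 1/2 := hδ' (by
        rw [Real.dist_eq]
        have : |1 - ε - 1| = ε := by rw [show (1:ℝ) - ε - 1 = -ε by ring, abs_neg,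
          abs_of_pos hεpos]
        rw [this]
        exact lt_of_le_of_lt (min_le_left _ _) (by linarith))
      rw [h1, Real.dist_eq] at this
      have := abs_lt.mp this
      linarith [this.1]
    have hsplit : m = (∫ t in (0:ℝ)..(1-ε), g t) + ∫ t in (1-ε)..1, g t :=
      (intervalIntegral.integral_add_adjacent_intervals (hint 0 (1-ε)) (hint (1-ε) 1)).symm
    have b1 : (0:ℝ) ≤ ∫ t in (0:ℝ)..(1-ε), g t := by
      have := int_lower hc hm (by linarith : (0:ℝ) ≤ 1 - ε)
      rw [h0] at this; linarith
    have b2 : ε * g (1 - ε) ≤ ∫ t in (1-ε)..1, g t := by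
      have := int_lower hc hm (by linarith : (1:ℝ) - ε ≤ 1)
      have h' : 1 - (1 - ε) = ε := by ring
      rwa [h'] at this
    nlinarith
  refine ⟨⟨hmpos, hmlt⟩, ?_, ?_⟩
  · -- g (1 - m) > 0
    by_contra hle
    push_neg at hle
    set s := 1 - m with hs_def
    have hs0 : 0 < s := by simp only [hs_def]; linarith
    have hs1 : s < 1 := by simp only [hs_def]; linarith
    have hgs : g s = 0 := le_antisymm hle (h0 ▸ hm hs0.le)
    -- g vanishes on [0, s]
    have hzero : Set.EqOn g (fun _ => (0:ℝ)) (Set.uIcc 0 s) := by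
      intro t ht
      rw [Set.uIcc_of_le hs0.le] at ht
      exact le_antisymm (hgs ▸ hm ht.2) (h0 ▸ hm ht.1)
    have hI0 : (∫ t in (0:ℝ)..s, g t) = 0 := by
      rw [intervalIntegral.integral_congr hzero]; simp
    -- continuity at s
    obtain ⟨δ₂, hδ₂, hδ''⟩ := Metric.continuousAt_iff.mp (hc.continuousAt (x := s)) (1/2)
      (by norm_num)
    set ε := min (δ₂ / 2) m with hεdef
    have hεpos : 0 < ε := lt_min (by linarith) hmpos
    have hεm : ε ≤ m := min_le_right _ _
    have hgsε : g (s + ε) ≤ 1/2 := by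
      have : dist (g (s + ε)) (g s) < 1/2 := hδ'' (by
        rw [Real.dist_eq, add_sub_cancel_left, abs_of_pos hεpos]
        exact lt_of_le_of_lt (min_le_left _ _) (by linarith))
      rw [hgs, Real.dist_eq, sub_zero] at this
      exact le_of_lt (lt_of_le_of_lt (le_abs_self _) this)
    have hsplit : m = (∫ t in (0:ℝ)..s, g t) + (∫ t in s..(s+ε), g t)
        + ∫ t in (s+ε)..1, g t := by
      rw [intervalIntegral.integral_add_adjacent_intervals (hint 0 s) (hint s (s+ε)),
        intervalIntegral.integral_add_adjacent_intervals (hint 0 (s+ε)) (hint (s+ε) 1)]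
    have b1 : (∫ t in s..(s+ε), g t) ≤ ε * g (s + ε) := by
      have := int_upper hc hm (by linarith : s ≤ s + ε)
      have h' : s + ε - s = ε := by ring
      rwa [h'] at this
    have b2 : (∫ t in (s+ε)..1, g t) ≤ (1 - (s + ε)) * 1 := by
      have := int_upper hc hm (by simp only [hs_def]; linarith : s + ε ≤ 1)
      rwa [h1] at this
    have : m ≤ 0 + ε * (1/2) + (1 - (s + ε)) := by
      calc m = _ := hsplit
      _ ≤ 0 + ε * g (s+ε) + (1 - (s+ε)) * 1 := by
          refine add_le_add (add_le_add (le_of_eq hI0) b1) b2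
      _ ≤ 0 + ε * (1/2) + (1 - (s + ε)) := by nlinarith
    simp only [hs_def] at this
    linarith
  · -- g (1 - m) < 1
    by_contra hge
    push_neg at hge
    set s := 1 - m with hs_def
    have hs0 : 0 < s := by simp only [hs_def]; linarith
    have hs1 : s < 1 := by simp only [hs_def]; linarith
    have hgs : g s = 1 := le_antisymm (h1 ▸ hm hs1.le) hge
    have hone : Set.EqOn g (fun _ => (1:ℝ)) (Set.uIcc s 1) := by
      intro t ht
      rw [Set.uIcc_of_le hs1.le] at ht
      exact le_antisymm (h1 ▸ hm ht.2) (hgs ▸ hm ht.1)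
    have hI1 : (∫ t in s..(1:ℝ), g t) = 1 - s := by
      rw [intervalIntegral.integral_congr hone]; simp
    obtain ⟨δ₂, hδ₂, hδ''⟩ := Metric.continuousAt_iff.mp (hc.continuousAt (x := s)) (1/2)
      (by norm_num)
    set ε := min (δ₂ / 2) s with hεdef
    have hεpos : 0 < ε := lt_min (by linarith) hs0
    have hεs : ε ≤ s := min_le_right _ _
    have hgsε : 1/2 ≤ g (s - ε) := by
      have : dist (g (s - ε)) (g s) < 1/2 := hδ'' (by
        rw [Real.dist_eq]
        have h' : |s - ε - s| = ε := by rw [show s - ε - s = -ε by ring, abs_neg,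
          abs_of_pos hεpos]
        rw [h']
        exact lt_of_le_of_lt (min_le_left _ _) (by linarith))
      rw [hgs, Real.dist_eq] at this
      have := abs_lt.mp this
      linarith [this.1]
    have hsplit : m = (∫ t in (0:ℝ)..(s-ε), g t) + (∫ t in (s-ε)..s, g t)
        + ∫ t in s..(1:ℝ), g t := by
      rw [intervalIntegral.integral_add_adjacent_intervals (hint 0 (s-ε)) (hint (s-ε) s),
        intervalIntegral.integral_add_adjacent_intervals (hint 0 s) (hint s 1)]
    have b1 : (0:ℝ) ≤ ∫ t in (0:ℝ)..(s-ε), g t := by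
      have := int_lower hc hm (by linarith : (0:ℝ) ≤ s - ε)
      rw [h0] at this; linarith
    have b2 : ε * g (s - ε) ≤ ∫ t in (s-ε)..s, g t := by
      have := int_lower hc hm (by linarith : s - ε ≤ s)
      have h' : s - (s - ε) = ε := by ring
      rwa [h'] at this
    have : 0 + ε * (1/2) + (1 - s) ≤ m := by
      calc (0:ℝ) + ε * (1/2) + (1 - s) ≤ 0 + ε * g (s - ε) + (1 - s) := by nlinarith
      _ ≤ (∫ t in (0:ℝ)..(s-ε), g t) + (∫ t in (s-ε)..s, g t) + ∫ t in s..(1:ℝ), g t := by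
          refine add_le_add (add_le_add b1 b2) (le_of_eq hI1.symm)
      _ = m := hsplit.symm
    simp only [hs_def] at this
    linarith
end SuspAux

namespace SuspAux

variable {X : Type*} [TopologicalSpace X] [Nonempty X]

/-- The height profile of a path, as a real function. -/
noncomputable def fR (γ : Path (suspBot X) (suspTop X)) : ℝ → ℝ :=
  fun t => suspPi (γ (Set.projIcc 0 1 zero_le_one t))

lemma continuous_fR (γ : Path (suspBot X) (suspTop X)) : Continuous (fR γ) :=
  continuous_suspPi.comp (γ.continuous.comp continuous_projIcc)

lemma fR_coe (γ : Path (suspBot X) (suspTop X)) (u : unitInterval) :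
    fR γ (u : ℝ) = suspPi (γ u) := by
  rw [fR, Set.projIcc_val]

lemma fR_zero (γ : Path (suspBot X) (suspTop X)) : fR γ 0 = 0 := by
  rw [fR, Set.projIcc_left]
  show suspPi (γ 0) = 0
  rw [γ.source]
  rfl

lemma fR_one (γ : Path (suspBot X) (suspTop X)) : fR γ 1 = 1 := by
  rw [fR, Set.projIcc_right]
  show suspPi (γ 1) = 1
  rw [γ.target]
  rfl

lemma fR_mono (γ : DirSuspPaths X) : Monotone (fR γ.1) := by
  obtain ⟨a, f, hmf, heq⟩ := γ.2
  intro t1 t2 h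
  show suspPi (γ.1 _) ≤ suspPi (γ.1 _)
  rw [heq, heq, suspPi_mk, suspPi_mk]
  exact_mod_cast hmf (Set.monotone_projIcc zero_le_one h)

/-- The mean height of a path. -/
noncomputable def mD (γ : DirSuspPaths X) : ℝ := ∫ t in (0:ℝ)..1, fR γ.1 t

lemma keyD (γ : DirSuspPaths X) :
    mD γ ∈ Set.Ioo (0:ℝ) 1 ∧ fR γ.1 (1 - mD γ) ∈ Set.Ioo (0:ℝ) 1 :=
  key_integral (continuous_fR _) (fR_mono γ) (fR_zero _) (fR_one _)

/-- The canonical interior time of a directed path. -/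
noncomputable def qD (γ : DirSuspPaths X) : ℝ := 1 - mD γ

lemma qD_mem (γ : DirSuspPaths X) : qD γ ∈ Set.Ioo (0:ℝ) 1 := by
  have := (keyD γ).1; constructor <;> [skip; skip] <;> · simp only [qD]; simp [Set.mem_Ioo] at this; linarith [this.1, this.2]

/-- The canonical interior time, as an element of the interval. -/
noncomputable def qI (γ : DirSuspPaths X) : unitInterval :=
  ⟨qD γ, (qD_mem γ).1.le, (qD_mem γ).2.le⟩

/-- The height of the path at the canonical interior time. -/
noncomputable def cD (γ : DirSuspPaths X) : ℝ := fR γ.1 (qD γ)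

lemma cD_mem (γ : DirSuspPaths X) : cD γ ∈ Set.Ioo (0:ℝ) 1 := (keyD γ).2

/-- interval version of `cD` -/
noncomputable def cI (γ : DirSuspPaths X) : unitInterval :=
  ⟨cD γ, (cD_mem γ).1.le, (cD_mem γ).2.le⟩

lemma cD_pi (γ : DirSuspPaths X) : suspPi (γ.1 (qI γ)) = cD γ :=
  (fR_coe γ.1 (qI γ)).symm

/-- The clamping constant. -/
noncomputable def KD (γ : DirSuspPaths X) : ℝ := (cD γ * (1 - cD γ))⁻¹

lemma KD_cancel (γ : DirSuspPaths X) : cD γ * (1 - cD γ) * KD γ = 1 := by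
  have h := cD_mem γ
  exact mul_inv_cancel₀ (by nlinarith [h.1, h.2])

lemma KD_pos (γ : DirSuspPaths X) : 0 < KD γ := by
  have h := cD_mem γ
  exact inv_pos.mpr (by nlinarith [h.1, h.2])

lemma one_le_KD (γ : DirSuspPaths X) : 1 ≤ KD γ := by
  have h := cD_mem γ
  have h2 := KD_cancel γ
  nlinarith [h.1, h.2, KD_pos γ, sq_nonneg (1 - 2 * cD γ),
    mul_nonneg (sq_nonneg (1 - 2 * cD γ)) (KD_pos γ).le]

lemma KD_max (γ : DirSuspPaths X) : max (KD γ) 1 = KD γ := max_eq_left (one_le_KD γ)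

lemma KD_mul_le (γ : DirSuspPaths X) {u : ℝ} (hu : cD γ ≤ u) : 1 ≤ max (KD γ) 1 * u := by
  rw [KD_max]
  have h := cD_mem γ
  have h2 := KD_cancel γ
  have h3 : 1 ≤ KD γ * cD γ := by nlinarith [h.1, h.2, KD_pos γ]
  nlinarith [one_le_KD γ, h.1, KD_pos γ]

lemma KD_mul_le' (γ : DirSuspPaths X) {u : ℝ} (hu : u ≤ cD γ) :
    1 ≤ max (KD γ) 1 * (1 - u) := by
  rw [KD_max]
  have h := cD_mem γ
  have h2 := KD_cancel γ
  have h3 : 1 ≤ KD γ * (1 - cD γ) := by nlinarith [h.1, h.2, KD_pos γ]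
  nlinarith [one_le_KD γ, h.2, KD_pos γ]

lemma exists_S (γ : DirSuspPaths X) : ∃ x : X, γ.1 (qI γ) = QS (x, cI γ) := by
  obtain ⟨a, f, hmf, heq⟩ := γ.2
  refine ⟨a (qI γ), ?_⟩
  rw [heq]
  have : f (qI γ) = cI γ := by
    apply Subtype.ext
    show ((f (qI γ) : unitInterval) : ℝ) = cD γ
    have := cD_pi γ
    rw [heq, suspPi_mk] at this
    exact this
  rw [this]

/-- The homotopy inverse of `J`. -/
noncomputable def Sfun (γ : DirSuspPaths X) : X := (exists_S γ).choose

lemma Sfun_spec (γ : DirSuspPaths X) : γ.1 (qI γ) = QS (Sfun γ, cI γ) :=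
  (exists_S γ).choose_spec

end SuspAux

namespace SuspAux

/-- integration of a continuous function over the unit interval -/
noncomputable def intFun (h : C(unitInterval, ℝ)) : ℝ :=
  ∫ t in (0:ℝ)..1, h (Set.projIcc 0 1 zero_le_one t)

lemma lipschitz_intFun : LipschitzWith 1 intFun := by
  apply LipschitzWith.of_dist_le_mul
  intro h1 h2
  have i1 : IntervalIntegrable (fun t => h1 (Set.projIcc 0 1 zero_le_one t))
      MeasureTheory.volume 0 1 :=
    (h1.continuous.comp continuous_projIcc).intervalIntegrable _ _
  have i2 : IntervalIntegrable (fun t => h2 (Set.projIcc 0 1 zero_le_one t))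
      MeasureTheory.volume 0 1 :=
    (h2.continuous.comp continuous_projIcc).intervalIntegrable _ _
  simp only [NNReal.coe_one, one_mul]
  rw [intFun, intFun, Real.dist_eq, ← intervalIntegral.integral_sub i1 i2]
  have hb := intervalIntegral.norm_integral_le_of_norm_le_const (C := dist h1 h2)
    (f := fun t => h1 (Set.projIcc 0 1 zero_le_one t) - h2 (Set.projIcc 0 1 zero_le_one t))
    (a := 0) (b := 1) (fun x _ => by
      rw [Real.norm_eq_abs, ← Real.dist_eq]
      exact ContinuousMap.dist_apply_le_dist _)
  simpa using hb

variable {X : Type*} [TopologicalSpace X] [Nonempty X]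

/-- the quotient map, bundled -/
noncomputable def QSCM : C(X × unitInterval, Susp X) :=
  ⟨fun p => QS p, continuous_quotient_mk'⟩

/-- the height map, bundled -/
noncomputable def suspPiCM : C(Susp X, ℝ) := ⟨suspPi, continuous_suspPi⟩

lemma continuous_pathCoe :
    Continuous fun γ : DirSuspPaths X => (γ.1 : C(unitInterval, Susp X)) :=
  by
  have h1 : Continuous (Subtype.val : DirSuspPaths X → Path (suspBot X) (suspTop X)) :=
    continuous_subtype_val
  have h2 : Continuous ((↑) : Path (suspBot X) (suspTop X) → C(unitInterval, Susp X)) :=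
    continuous_induced_dom
  exact h2.comp h1

lemma continuous_evalD :
    Continuous fun p : DirSuspPaths X × unitInterval => p.1.1 p.2 :=
  continuous_eval.comp ((continuous_subtype_val.comp continuous_fst).prodMk continuous_snd)

lemma continuous_mD : Continuous (mD : DirSuspPaths X → ℝ) := by
  have : (mD : DirSuspPaths X → ℝ) =
      fun γ => intFun (suspPiCM.comp (γ.1 : C(unitInterval, Susp X))) := rfl
  rw [this]
  exact lipschitz_intFun.continuous.comp
    ((ContinuousMap.continuous_postcomp suspPiCM).comp continuous_pathCoe)

lemma continuous_qD : Continuous (qD : DirSuspPaths X → ℝ) :=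
  continuous_const.sub continuous_mD

lemma continuous_qI : Continuous (qI : DirSuspPaths X → unitInterval) :=
  continuous_qD.subtype_mk _

lemma continuous_cD : Continuous (cD : DirSuspPaths X → ℝ) := by
  have : (cD : DirSuspPaths X → ℝ) = fun γ => suspPi (γ.1 (qI γ)) := by
    funext γ; exact (cD_pi γ).symm
  rw [this]
  exact continuous_suspPi.comp (continuous_evalD.comp (continuous_id.prodMk continuous_qI))

lemma continuous_KD : Continuous (KD : DirSuspPaths X → ℝ) := by
  apply Continuous.inv₀ (continuous_cD.mul (continuous_const.sub continuous_cD))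
  intro γ
  show cD γ * (1 - cD γ) ≠ 0
  have h := cD_mem γ
  nlinarith [h.1, h.2]

end SuspAux

namespace SuspAux

variable {X : Type*} [TopologicalSpace X] [Nonempty X]

/-- midpoint of the unit interval -/
noncomputable def half : unitInterval := ⟨1/2, by norm_num, by norm_num⟩

lemma saturation (U : Set X) :
    QS ⁻¹' (QS '' (U ×ˢ {u : unitInterval | 0 < (u:ℝ) ∧ (u:ℝ) < 1})) =
      U ×ˢ {u : unitInterval | 0 < (u:ℝ) ∧ (u:ℝ) < 1} := by
  apply Set.Subset.antisymm
  · rintro ⟨x, u⟩ h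
    obtain ⟨⟨y, v⟩, ⟨hyU, hv0, hv1⟩, heq⟩ := h
    rcases Quotient.exact heq with h | ⟨h1, h2⟩ | ⟨h1, h2⟩
    · cases h; exact ⟨hyU, hv0, hv1⟩
    · rw [show v = 0 from h1] at hv0; norm_num at hv0
    · rw [show v = 1 from h1] at hv1; norm_num at hv1
  · exact Set.subset_preimage_image _ _

lemma isOpen_interior_prod {U : Set X} (hU : IsOpen U) :
    IsOpen (U ×ˢ {u : unitInterval | 0 < (u:ℝ) ∧ (u:ℝ) < 1}) := by
  apply hU.prod
  have : {u : unitInterval | 0 < (u:ℝ) ∧ (u:ℝ) < 1} =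
      ((↑) : unitInterval → ℝ) ⁻¹' (Set.Ioo 0 1) := rfl
  rw [this]
  exact isOpen_Ioo.preimage continuous_subtype_val

lemma inducing_E : Topology.IsInducing (fun x : X => QS (x, half)) := by
  refine ⟨le_antisymm (continuous_iff_le_induced.mp
    (continuous_quotient_mk'.comp (continuous_id.prodMk continuous_const))) ?_⟩
  rw [TopologicalSpace.le_def]
  intro U hU
  rw [isOpen_induced_iff]
  refine ⟨QS '' (U ×ˢ {u : unitInterval | 0 < (u:ℝ) ∧ (u:ℝ) < 1}), ?_, ?_⟩
  · refine isQuotientMap_quotient_mk'.isOpen_preimage.mp ?_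
    show IsOpen (QS ⁻¹' _)
    rw [saturation]
    exact isOpen_interior_prod hU
  · ext x
    constructor
    · intro hx
      have : (x, half) ∈ QS ⁻¹' (QS '' (U ×ˢ {u : unitInterval | 0 < (u:ℝ) ∧ (u:ℝ) < 1})) := hx
      rw [saturation] at this
      exact this.1
    · intro hx
      exact Set.mem_image_of_mem _ ⟨hx, by norm_num [half], by norm_num [half]⟩

lemma TI_cI (γ : DirSuspPaths X) {v : unitInterval} : TI (cI γ) v (KD γ) = v := by
  apply Subtype.ext
  exact T_mid v.2 (KD_mul_le γ le_rfl) (KD_mul_le' γ le_rfl)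

lemma continuous_Sfun : Continuous (Sfun : DirSuspPaths X → X) := by
  rw [(inducing_E (X := X)).continuous_iff]
  have heq : ((fun x : X => QS (x, half)) ∘ Sfun) =
      fun γ : DirSuspPaths X => Theta (γ.1 (qI γ)) (half, KD γ) := by
    funext γ
    show QS (Sfun γ, half) = _
    rw [Sfun_spec γ, Theta_mk, TI_cI]
  rw [heq]
  have h1 : Continuous fun γ : DirSuspPaths X => Theta (γ.1 (qI γ)) :=
    continuous_Theta.comp (continuous_evalD.comp (continuous_id.prodMk continuous_qI))
  exact continuous_eval.comp (h1.prodMk (continuous_const.prodMk continuous_KD))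

end SuspAux

namespace SuspAux

variable {X : Type*} [TopologicalSpace X] [Nonempty X]

/-- The map `J`, on points: the path `t ↦ [x, t]`. -/
noncomputable def Jpath (x : X) : Path (suspBot X) (suspTop X) where
  toFun t := QS (x, t)
  continuous_toFun := continuous_quotient_mk'.comp (continuous_const.prodMk continuous_id)
  source' := QS_eq_bot x
  target' := QS_eq_top x

@[simp] lemma Jpath_apply (x : X) (t : unitInterval) : Jpath x t = QS (x, t) := rfl

/-- The map `J` into the directed path space. -/
noncomputable def JD (x : X) : DirSuspPaths X :=
  ⟨Jpath x, ContinuousMap.const _ x, ContinuousMap.id _, monotone_id, fun _ => rfl⟩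

lemma continuous_JD : Continuous (JD : X → DirSuspPaths X) := by
  apply Continuous.subtype_mk
  rw [continuous_induced_rng]
  have heq : ∀ x : X, ((Jpath x : Path (suspBot X) (suspTop X)) : C(unitInterval, Susp X)) =
      ContinuousMap.curry QSCM x := fun x => ContinuousMap.ext fun t => rfl
  exact (ContinuousMap.curry (QSCM (X := X))).continuous.congr fun x => (heq x).symm

lemma fR_JD (x : X) (t : ℝ) :
    fR (Jpath x) t = ((Set.projIcc 0 1 zero_le_one t : unitInterval) : ℝ) := rfl

lemma mD_JD (x : X) : mD (JD x) = 1/2 := by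
  have hcong : Set.EqOn (fR (Jpath x)) id (Set.uIcc 0 1) := by
    intro t ht
    rw [Set.uIcc_of_le zero_le_one] at ht
    rw [fR_JD, Set.projIcc_of_mem _ ht]
    rfl
  show (∫ t in (0:ℝ)..1, fR (Jpath x) t) = 1/2
  rw [intervalIntegral.integral_congr hcong]
  simp [integral_id]

lemma qD_JD (x : X) : qD (JD x) = 1/2 := by rw [qD, mD_JD]; norm_num

lemma cD_JD (x : X) : cD (JD x) = 1/2 := by
  rw [cD, qD_JD]
  show fR (Jpath x) (1/2) = 1/2
  rw [fR_JD, Set.projIcc_of_mem _ (by norm_num : (1/2:ℝ) ∈ Set.Icc (0:ℝ) 1)]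

lemma Sfun_unique (γ : DirSuspPaths X) {x : X} (h : γ.1 (qI γ) = QS (x, cI γ)) :
    Sfun γ = x := by
  have h2 := (Sfun_spec γ).symm.trans h
  rcases Quotient.exact h2 with h | ⟨h1, _⟩ | ⟨h1, _⟩
  · exact congrArg Prod.fst h
  · exfalso
    have : cD γ = 0 := congrArg Subtype.val h1
    have := (cD_mem γ).1
    linarith
  · exfalso
    have : cD γ = 1 := congrArg Subtype.val h1
    have := (cD_mem γ).2
    linarith

lemma Sfun_JD (x : X) : Sfun (JD x) = x := by
  apply Sfun_unique
  have hq : cI (JD x) = qI (JD x) := Subtype.ext (by rw [show (cI (JD x) : ℝ) = cD (JD x) from rfl, cD_JD, show (qI (JD x) : ℝ) = qD (JD x) from rfl, qD_JD])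
  rw [hq]
  rfl

end SuspAux

namespace SuspAux

variable {X : Type*} [TopologicalSpace X] [Nonempty X]

lemma convex_mem {a b l : ℝ} (ha : a ∈ Set.Icc (0:ℝ) 1) (hb : b ∈ Set.Icc (0:ℝ) 1)
    (hl : l ∈ Set.Icc (0:ℝ) 1) : (1 - l) * a + l * b ∈ Set.Icc (0:ℝ) 1 := by
  constructor
  · nlinarith [ha.1, hb.1, hl.1, hl.2]
  · nlinarith [ha.2, hb.2, hl.1, hl.2]

/-- the time-reparametrization of the homotopy -/
noncomputable def wI (s : unitInterval) (γ : DirSuspPaths X) (t : unitInterval) :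
    unitInterval :=
  ⟨(1 - (s:ℝ)) * qD γ + s * t,
    convex_mem ⟨(qD_mem γ).1.le, (qD_mem γ).2.le⟩ ⟨t.2.1, t.2.2⟩ ⟨s.2.1, s.2.2⟩⟩

/-- the target height of the homotopy -/
noncomputable def vI (s : unitInterval) (γ : DirSuspPaths X) (t : unitInterval) :
    unitInterval :=
  ⟨(1 - (s:ℝ)) * t + s * suspPi (γ.1 t),
    convex_mem ⟨t.2.1, t.2.2⟩ (suspPi_mem _) ⟨s.2.1, s.2.2⟩⟩

/-- the underlying function of the homotopy between `J ∘ S` and the identity -/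
noncomputable def Hfn (s : unitInterval) (γ : DirSuspPaths X) (t : unitInterval) : Susp X :=
  Theta (γ.1 (wI s γ t)) (vI s γ t, KD γ)

lemma continuous_Hfn :
    Continuous (fun p : (unitInterval × DirSuspPaths X) × unitInterval =>
      Hfn p.1.1 p.1.2 p.2) := by
  have hs : Continuous fun p : (unitInterval × DirSuspPaths X) × unitInterval => (p.1.1 : ℝ) :=
    continuous_subtype_val.comp (continuous_fst.comp continuous_fst)
  have ht : Continuous fun p : (unitInterval × DirSuspPaths X) × unitInterval => (p.2 : ℝ) :=
    continuous_subtype_val.comp continuous_snd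
  have hγ : Continuous fun p : (unitInterval × DirSuspPaths X) × unitInterval => p.1.2 :=
    continuous_snd.comp continuous_fst
  have hq : Continuous fun p : (unitInterval × DirSuspPaths X) × unitInterval => qD p.1.2 :=
    continuous_qD.comp hγ
  have hwI : Continuous fun p : (unitInterval × DirSuspPaths X) × unitInterval =>
      wI p.1.1 p.1.2 p.2 :=
    (((continuous_const.sub hs).mul hq).add (hs.mul ht)).subtype_mk _
  have hA : Continuous fun p : (unitInterval × DirSuspPaths X) × unitInterval =>
      p.1.2.1 (wI p.1.1 p.1.2 p.2) := continuous_evalD.comp (hγ.prodMk hwI)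
  have hpi : Continuous fun p : (unitInterval × DirSuspPaths X) × unitInterval =>
      suspPi (p.1.2.1 p.2) :=
    continuous_suspPi.comp (continuous_evalD.comp (hγ.prodMk continuous_snd))
  have hvI : Continuous fun p : (unitInterval × DirSuspPaths X) × unitInterval =>
      vI p.1.1 p.1.2 p.2 :=
    (((continuous_const.sub hs).mul ht).add (hs.mul hpi)).subtype_mk _
  have hK : Continuous fun p : (unitInterval × DirSuspPaths X) × unitInterval => KD p.1.2 :=
    continuous_KD.comp hγ
  exact continuous_eval.comp ((continuous_Theta.comp hA).prodMk (hvI.prodMk hK))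

lemma wI_le_q (s : unitInterval) (γ : DirSuspPaths X) : ((wI s γ 0 : unitInterval) : ℝ) ≤ qD γ := by
  show (1 - (s:ℝ)) * qD γ + s * ((0 : unitInterval) : ℝ) ≤ qD γ
  rw [Set.Icc.coe_zero]
  nlinarith [s.2.1, s.2.2, (qD_mem γ).1]

lemma q_le_wI (s : unitInterval) (γ : DirSuspPaths X) : qD γ ≤ ((wI s γ 1 : unitInterval) : ℝ) := by
  show qD γ ≤ (1 - (s:ℝ)) * qD γ + s * ((1 : unitInterval) : ℝ)
  rw [Set.Icc.coe_one]
  nlinarith [s.2.1, s.2.2, (qD_mem γ).2]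

lemma suspPi_le_c (γ : DirSuspPaths X) {u : unitInterval} (h : (u : ℝ) ≤ qD γ) :
    suspPi (γ.1 u) ≤ cD γ := by
  rw [← fR_coe]
  exact fR_mono γ h

lemma c_le_suspPi (γ : DirSuspPaths X) {u : unitInterval} (h : qD γ ≤ (u : ℝ)) :
    cD γ ≤ suspPi (γ.1 u) := by
  rw [← fR_coe]
  exact fR_mono γ h

lemma Hfn_source (s : unitInterval) (γ : DirSuspPaths X) : Hfn s γ 0 = suspBot X := by
  obtain ⟨a, f, hmf, heq⟩ := γ.2
  have hv : vI s γ 0 = 0 := by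
    apply Subtype.ext
    show (1 - (s:ℝ)) * ((0 : unitInterval) : ℝ) + s * suspPi (γ.1 0) = ((0:unitInterval) : ℝ)
    rw [γ.1.source]
    show (1 - (s:ℝ)) * 0 + s * ((0 : unitInterval) : ℝ) = ((0:unitInterval) : ℝ)
    rw [Set.Icc.coe_zero]; ring
  rw [Hfn, hv, heq, Theta_mk]
  have hT : TI (f (wI s γ 0)) 0 (KD γ) = 0 := by
    apply Subtype.ext
    apply T_zero (f (wI s γ 0)).2.1
    apply KD_mul_le' γ
    have h1 : ((f (wI s γ 0)) : ℝ) = suspPi (γ.1 (wI s γ 0)) := by rw [heq, suspPi_mk]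
    rw [h1]
    exact suspPi_le_c γ (wI_le_q s γ)
  rw [hT]
  exact QS_eq_bot _

lemma Hfn_target (s : unitInterval) (γ : DirSuspPaths X) : Hfn s γ 1 = suspTop X := by
  obtain ⟨a, f, hmf, heq⟩ := γ.2
  have hv : vI s γ 1 = 1 := by
    apply Subtype.ext
    show (1 - (s:ℝ)) * ((1 : unitInterval) : ℝ) + s * suspPi (γ.1 1) = ((1:unitInterval) : ℝ)
    rw [γ.1.target]
    show (1 - (s:ℝ)) * ((1 : unitInterval) : ℝ) + s * ((1 : unitInterval) : ℝ) = _
    rw [Set.Icc.coe_one]; ring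
  rw [Hfn, hv, heq, Theta_mk]
  have hT : TI (f (wI s γ 1)) 1 (KD γ) = 1 := by
    apply Subtype.ext
    apply T_one (f (wI s γ 1)).2.2
    apply KD_mul_le γ
    have h1 : ((f (wI s γ 1)) : ℝ) = suspPi (γ.1 (wI s γ 1)) := by rw [heq, suspPi_mk]
    rw [h1]
    exact c_le_suspPi γ (q_le_wI s γ)
  rw [hT]
  exact QS_eq_top _

/-- the paths constituting the homotopy -/
noncomputable def Hpath (s : unitInterval) (γ : DirSuspPaths X) :
    Path (suspBot X) (suspTop X) where
  toFun t := Hfn s γ t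
  continuous_toFun := continuous_Hfn.comp
    (continuous_const.prodMk continuous_id : Continuous
      fun t : unitInterval => (((s, γ), t) : (unitInterval × DirSuspPaths X) × unitInterval))
  source' := Hfn_source s γ
  target' := Hfn_target s γ

lemma Hpath_mem (s : unitInterval) (γ : DirSuspPaths X) :
    ∃ (a : C(unitInterval, X)) (f : C(unitInterval, unitInterval)),
      Monotone ⇑f ∧ ∀ t, (Hpath s γ) t = Quotient.mk (suspSetoid X) (a t, f t) := by
  obtain ⟨a, f, hmf, heq⟩ := γ.2
  have hwc : Continuous fun t : unitInterval => wI s γ t :=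
    ((continuous_const.mul continuous_const).add
      (continuous_const.mul continuous_subtype_val)).subtype_mk _
  refine ⟨a.comp ⟨fun t => wI s γ t, hwc⟩,
    ⟨fun t => TI (f (wI s γ t)) (vI s γ t) (KD γ), ?_⟩, ?_, ?_⟩
  · apply Continuous.subtype_mk
    have h1 : Continuous fun t : unitInterval => ((f (wI s γ t)) : ℝ) :=
      continuous_subtype_val.comp (f.continuous.comp hwc)
    have h2 : Continuous fun t : unitInterval => ((vI s γ t) : ℝ) :=
      ((continuous_const.mul continuous_subtype_val).add
        (continuous_const.mul (continuous_suspPi.comp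
          (γ.1.continuous_toFun.comp continuous_id)))).subtype_mk _ |>.subtype_val
    exact continuous_T.comp ((h1.prodMk h2).prodMk continuous_const)
  · -- monotonicity
    intro t1 t2 hle
    show TI _ _ _ ≤ TI _ _ _
    rw [← Subtype.coe_le_coe]
    apply T_mono
    · exact_mod_cast hmf (show wI s γ t1 ≤ wI s γ t2 by
        rw [← Subtype.coe_le_coe]
        show (1 - (s:ℝ)) * qD γ + s * t1 ≤ (1 - (s:ℝ)) * qD γ + s * t2
        have : (t1 : ℝ) ≤ t2 := hle
        nlinarith [s.2.1])
    · show (1 - (s:ℝ)) * t1 + s * suspPi (γ.1 t1) ≤ (1 - (s:ℝ)) * t2 + s * suspPi (γ.1 t2)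
      have h1 : (t1 : ℝ) ≤ t2 := hle
      have h2 : suspPi (γ.1 t1) ≤ suspPi (γ.1 t2) := by
        rw [← fR_coe, ← fR_coe]
        exact fR_mono γ h1
      nlinarith [s.2.1, s.2.2]
  · intro t
    have hrfl : (Hpath s γ) t = Theta (γ.1 (wI s γ t)) (vI s γ t, KD γ) := rfl
    rw [hrfl, heq, Theta_mk]
    rfl

/-- the homotopy, as a map into the directed path space -/
noncomputable def HD (s : unitInterval) (γ : DirSuspPaths X) : DirSuspPaths X :=
  ⟨Hpath s γ, Hpath_mem s γ⟩

end SuspAux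

namespace SuspAux

variable {X : Type*} [TopologicalSpace X] [Nonempty X]

lemma continuous_HD : Continuous fun p : unitInterval × DirSuspPaths X => HD p.1 p.2 := by
  apply Continuous.subtype_mk
  rw [continuous_induced_rng]
  have heq : ∀ p : unitInterval × DirSuspPaths X,
      ((Hpath p.1 p.2 : Path (suspBot X) (suspTop X)) : C(unitInterval, Susp X)) =
        ContinuousMap.curry ⟨_, continuous_Hfn (X := X)⟩ p :=
    fun p => ContinuousMap.ext fun t => rfl
  exact (ContinuousMap.curry ⟨_, continuous_Hfn (X := X)⟩).continuous.congr
    fun p => (heq p).symm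

lemma TI_diag (u : unitInterval) (k : ℝ) : TI u u k = u :=
  Subtype.ext (T_diag ⟨u.2.1, u.2.2⟩)

lemma HD_zero (γ : DirSuspPaths X) : HD 0 γ = JD (Sfun γ) := by
  apply Subtype.ext
  apply Path.ext
  funext t
  show Hfn 0 γ t = QS (Sfun γ, t)
  have hw : wI 0 γ t = qI γ := Subtype.ext (by
    show (1 - ((0:unitInterval):ℝ)) * qD γ + ((0:unitInterval):ℝ) * t = qD γ
    rw [Set.Icc.coe_zero]; ring)
  have hv : vI 0 γ t = t := Subtype.ext (by
    show (1 - ((0:unitInterval):ℝ)) * t + ((0:unitInterval):ℝ) * suspPi (γ.1 t) = (t : ℝ)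
    rw [Set.Icc.coe_zero]; ring)
  rw [Hfn, hw, hv, Sfun_spec γ, Theta_mk, TI_cI]

lemma HD_one (γ : DirSuspPaths X) : HD 1 γ = γ := by
  apply Subtype.ext
  apply Path.ext
  funext t
  obtain ⟨a, f, hmf, heq⟩ := γ.2
  show Hfn 1 γ t = γ.1 t
  have hw : wI 1 γ t = t := Subtype.ext (by
    show (1 - ((1:unitInterval):ℝ)) * qD γ + ((1:unitInterval):ℝ) * t = (t : ℝ)
    rw [Set.Icc.coe_one]; ring)
  have hv : vI 1 γ t = f t := Subtype.ext (by
    show (1 - ((1:unitInterval):ℝ)) * t + ((1:unitInterval):ℝ) * suspPi (γ.1 t) = ((f t) : ℝ)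
    rw [heq t, suspPi_mk, Set.Icc.coe_one]; ring)
  rw [Hfn, hw, hv, heq t, Theta_mk, TI_diag]

/-- `J` as a continuous map -/
noncomputable def JCM : C(X, DirSuspPaths X) := ⟨JD, continuous_JD⟩

/-- `S` as a continuous map -/
noncomputable def SCM : C(DirSuspPaths X, X) := ⟨Sfun, continuous_Sfun⟩

/-- the homotopy between `J ∘ S` and the identity of the path space -/
noncomputable def rightHomotopy :
    ContinuousMap.Homotopy ((JCM (X := X)).comp SCM) (ContinuousMap.id _) where
  toFun p := HD p.1 p.2
  continuous_toFun := continuous_HD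
  map_zero_left γ := HD_zero γ
  map_one_left γ := HD_one γ

end SuspAux


/-- The map `J : X → P(ΣX)(𝟎,𝟏)`, `x ↦ (t ↦ [x, t])`, is a homotopy
equivalence. -/
theorem susp_pathSpace_homotopyEquiv (X : Type*) [TopologicalSpace X] [Nonempty X] :
    ∃ h : ContinuousMap.HomotopyEquiv X (DirSuspPaths X),
      ∀ (x : X) (t : unitInterval),
        (h.toFun x : DirSuspPaths X).val t =
          Quotient.mk (suspSetoid X) (x, t) := by
  refine ⟨⟨SuspAux.JCM, SuspAux.SCM, ?_, ?_⟩, fun x t => rfl⟩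
  · have h : (SuspAux.SCM).comp (SuspAux.JCM (X := X)) = ContinuousMap.id X :=
      ContinuousMap.ext fun x => SuspAux.Sfun_JD x
    rw [h]
  · exact ⟨SuspAux.rightHomotopy⟩
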